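/- arXiv:2412.04808 — 2 statements merged into one kernel-verified Lean document; each statement's English description precedes it below -/
import Mathlib

section
/- Let φ : [0,1) → (0,∞) be a smoothly increasing function such that 1/φ is convex, let k be a positive integer, and let f be a harmonic mapping on the open unit disk 𝔻. If f is φ-normal, then sup{ f^{#(k)}(z)/φ(|z|)^k : z ∈ 𝔻 } < ∞. -/
open Complex Metric Set Filter ComplexConjugate

/-- Spherical derivative of the harmonic mapping `f = h + conj g`. -/
noncomputable def sphDeriv (h g : ℂ → ℂ) (z : ℂ) : ℝ :=
  (‖deriv h z‖ + ‖deriv g z‖) / (1 + ‖h z + conj (g z)‖ ^ 2)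

/-- Extended spherical derivative of order `k` of the harmonic mapping `f = h + conj g`. -/
noncomputable def sphDerivK (k : ℕ) (h g : ℂ → ℂ) (z : ℂ) : ℝ :=
  (‖iteratedDeriv k h z‖ + ‖iteratedDeriv k g z‖) / (1 + ‖h z + conj (g z)‖ ^ (k + 1))

/-- `φ : [0,1) → (0,∞)` is smoothly increasing: `φ(r)(1-r) → ∞` as `r → 1⁻` and
`φ(|a + z/φ(|a|)|)/φ(|a|) → 1` as `|a| → 1⁻`, uniformly on compact subsets of `ℂ`. -/
def SmoothlyIncreasing (φ : ℝ → ℝ) : Prop :=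
  (∀ r ∈ Set.Ico (0 : ℝ) 1, 0 < φ r) ∧
  Tendsto (fun r : ℝ => φ r * (1 - r)) (nhdsWithin 1 (Set.Iio 1)) atTop ∧
  ∀ K : Set ℂ, IsCompact K →
    TendstoUniformlyOn (fun (a : ℂ) (z : ℂ) => φ ‖a + z / (φ ‖a‖ : ℂ)‖ / φ ‖a‖)
      (fun _ => 1) (Filter.comap (fun a : ℂ => ‖a‖) (nhdsWithin 1 (Set.Iio 1))) K


/-- Iterated Cauchy estimate with a nonexplicit constant. -/
lemma iterCauchy (m : ℕ) : ∃ c : ℝ, 0 < c ∧ ∀ (F : ℂ → ℂ) (a : ℂ) (R M : ℝ), 0 < R → 0 ≤ M →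
    DifferentiableOn ℂ F (ball a R) → (∀ z ∈ ball a R, ‖F z‖ ≤ M) →
    ‖iteratedDeriv m F a‖ ≤ c * M / R ^ m := by
  induction m with
  | zero =>
    refine ⟨1, one_pos, fun F a R M hR hM hF hbd => ?_⟩
    simpa using hbd a (mem_ball_self hR)
  | succ m IH =>
    obtain ⟨c₀, hc₀, IH⟩ := IH
    refine ⟨c₀ * 4 * 2 ^ m, by positivity, fun F a R M hR hM hF hbd => ?_⟩
    have hderiv : ∀ z ∈ ball a (R / 2), ‖deriv F z‖ ≤ 4 * M / R := by
      intro z hz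
      have hz' : ‖z - a‖ < R / 2 := by simpa [mem_ball, dist_eq_norm] using hz
      have hsub : closedBall z (R / 4) ⊆ ball a R := by
        intro w hw
        have hw' : ‖w - z‖ ≤ R / 4 := by simpa [mem_closedBall, dist_eq_norm] using hw
        have : ‖w - a‖ ≤ ‖w - z‖ + ‖z - a‖ := by
          simpa using norm_add_le (w - z) (z - a)
        rw [mem_ball, dist_eq_norm]
        linarith
      have hdc : DiffContOnCl ℂ F (ball z (R / 4)) :=
        ⟨hF.mono (ball_subset_closedBall.trans hsub),
          (hF.continuousOn.mono hsub).mono closure_ball_subset_closedBall⟩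
      have := Complex.norm_deriv_le_of_forall_mem_sphere_norm_le (by linarith : (0:ℝ) < R / 4)
        hdc (fun w hw => hbd w (hsub (sphere_subset_closedBall hw)))
      calc ‖deriv F z‖ ≤ M / (R / 4) := this
        _ = 4 * M / R := by field_simp
    have hFan : AnalyticOnNhd ℂ F (ball a R) := hF.analyticOnNhd isOpen_ball
    have hdF : DifferentiableOn ℂ (deriv F) (ball a (R / 2)) :=
      (hFan.deriv.differentiableOn).mono (ball_subset_ball (by linarith))
    have h4M : (0:ℝ) ≤ 4 * M / R := by positivity
    have := IH (deriv F) a (R / 2) (4 * M / R) (by linarith) h4M hdF hderiv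
    rw [iteratedDeriv_succ']
    calc ‖iteratedDeriv m (deriv F) a‖ ≤ c₀ * (4 * M / R) / (R / 2) ^ m := this
      _ = c₀ * 4 * 2 ^ m * M / R ^ (m + 1) := by
          rw [div_pow]
          field_simp
          ring


lemma vpointX {h g f : ℂ → ℂ} (hf : ∀ z, f z = h z + conj (g z)) {w : ℂ}
    (hhw : DifferentiableAt ℂ h w) (hgw : DifferentiableAt ℂ g w) :
    ∃ L : ℂ →L[ℝ] ℝ, HasFDerivAt (fun z => (Real.sqrt (1 + ‖f z‖ ^ 2))⁻¹) L w ∧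
      ‖L‖ ≤ (‖deriv h w‖ + ‖deriv g w‖) / (1 + ‖f w‖ ^ 2) := by
  set α := deriv h w with hα
  set β := deriv g w with hβ
  set DhT : ℂ →L[ℝ] ℂ := ((1 : ℂ →L[ℂ] ℂ).smulRight α).restrictScalars ℝ with hDhT
  set DgT : ℂ →L[ℝ] ℂ := ((1 : ℂ →L[ℂ] ℂ).smulRight β).restrictScalars ℝ with hDgT
  set DcT : ℂ →L[ℝ] ℂ := Complex.conjCLE.toContinuousLinearMap.comp DgT with hDcT
  have Dh : HasFDerivAt h DhT w := (hhw.hasDerivAt.hasFDerivAt).restrictScalars ℝ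
  have Dg : HasFDerivAt g DgT w := (hgw.hasDerivAt.hasFDerivAt).restrictScalars ℝ
  have Dc : HasFDerivAt (fun z => conj (g z)) DcT w := by
    have := (Complex.conjCLE.toContinuousLinearMap.hasFDerivAt (x := g w)).comp w Dg
    simpa [Function.comp_def] using this
  have Df : HasFDerivAt f (DhT + DcT) w := by
    have := Dh.add Dc
    have hfe : f = fun z => h z + conj (g z) := funext hf
    rw [hfe]
    exact this
  have hDfT : ∀ u : ℂ, ‖(DhT + DcT) u‖ ≤ (‖α‖ + ‖β‖) * ‖u‖ := by
    intro u
    have h1 : (DhT + DcT) u = u • α + conj (u • β) := by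
      simp [hDhT, hDcT, hDgT]
    rw [h1]
    calc ‖u • α + conj (u • β)‖ ≤ ‖u • α‖ + ‖conj (u • β)‖ := norm_add_le _ _
      _ = ‖u‖ * ‖α‖ + ‖u‖ * ‖β‖ := by
          rw [RCLike.norm_conj]; simp [norm_smul]
      _ = (‖α‖ + ‖β‖) * ‖u‖ := by ring
  set D : ℂ →L[ℝ] ℝ := 2 • ((innerSL ℝ) (f w)).comp (DhT + DcT) with hD
  have Dq : HasFDerivAt (fun z => ‖f z‖ ^ 2) D w := Df.norm_sq
  have D1q : HasFDerivAt (fun z => 1 + ‖f z‖ ^ 2) D w := Dq.const_add 1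
  set q₀ := ‖f w‖ ^ 2 with hq₀
  set s₀ := Real.sqrt (1 + q₀) with hs₀
  have hq₀0 : 0 ≤ q₀ := sq_nonneg _
  have hs₀pos : 0 < s₀ := Real.sqrt_pos.2 (by linarith)
  have hs₀sq : s₀ ^ 2 = 1 + q₀ := Real.sq_sqrt (by linarith)
  have hsqrt : HasDerivAt Real.sqrt (1 / (2 * s₀)) (1 + q₀) :=
    Real.hasDerivAt_sqrt (by positivity)
  have hinv : HasDerivAt (fun t => (Real.sqrt t)⁻¹) (-(1 / (2 * s₀)) / s₀ ^ 2) (1 + q₀) := by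
    have := hsqrt.inv hs₀pos.ne'
    exact this
  have hv : HasFDerivAt (fun z => (Real.sqrt (1 + ‖f z‖ ^ 2))⁻¹)
      ((-(1 / (2 * s₀)) / s₀ ^ 2) • D) w := by
    have := hinv.comp_hasFDerivAt w D1q
    exact this
  refine ⟨_, hv, ?_⟩
  apply ContinuousLinearMap.opNorm_le_bound _ (by positivity)
  intro u
  have hDu : ‖D u‖ ≤ 2 * ‖f w‖ * ((‖α‖ + ‖β‖) * ‖u‖) := by
    have : D u = 2 * (inner ℝ (f w) ((DhT + DcT) u) : ℝ) := by
      simp [hD, two_smul]; ring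
    rw [this]
    rw [norm_mul]
    have := abs_real_inner_le_norm (f w) ((DhT + DcT) u)
    have h2 : ‖(inner ℝ (f w) ((DhT + DcT) u) : ℝ)‖ ≤ ‖f w‖ * ((‖α‖ + ‖β‖) * ‖u‖) := by
      refine le_trans ?_ (mul_le_mul_of_nonneg_left (hDfT u) (norm_nonneg (f w)))
      simpa [Real.norm_eq_abs] using this
    calc ‖(2:ℝ)‖ * ‖(inner ℝ (f w) ((DhT + DcT) u) : ℝ)‖
        ≤ 2 * (‖f w‖ * ((‖α‖ + ‖β‖) * ‖u‖)) := by
          rw [show ‖(2:ℝ)‖ = 2 by simp]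
          exact mul_le_mul_of_nonneg_left h2 (by norm_num)
      _ = 2 * ‖f w‖ * ((‖α‖ + ‖β‖) * ‖u‖) := by ring
  have hnorm : ‖((-(1 / (2 * s₀)) / s₀ ^ 2) • D) u‖ = (1 / (2 * s₀) / s₀ ^ 2) * ‖D u‖ := by
    rw [ContinuousLinearMap.smul_apply, norm_smul, Real.norm_eq_abs, abs_div, abs_neg,
      _root_.abs_of_nonneg (by positivity : (0:ℝ) ≤ 1 / (2 * s₀)),
      _root_.abs_of_nonneg (by positivity : (0:ℝ) ≤ s₀ ^ 2)]
  rw [hnorm]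
  have hfw_le : ‖f w‖ ≤ s₀ := by
    rw [hs₀]
    have : ‖f w‖ = Real.sqrt q₀ := by rw [hq₀, Real.sqrt_sq (norm_nonneg _)]
    rw [this]
    exact Real.sqrt_le_sqrt (by linarith)
  calc (1 / (2 * s₀) / s₀ ^ 2) * ‖D u‖
      ≤ (1 / (2 * s₀) / s₀ ^ 2) * (2 * ‖f w‖ * ((‖α‖ + ‖β‖) * ‖u‖)) := by
        exact mul_le_mul_of_nonneg_left hDu (by positivity)
    _ = (‖f w‖ / s₀) * ((‖α‖ + ‖β‖) / s₀ ^ 2) * ‖u‖ := by field_simp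
    _ ≤ 1 * ((‖α‖ + ‖β‖) / s₀ ^ 2) * ‖u‖ := by
        have h1 : ‖f w‖ / s₀ ≤ 1 := (div_le_one hs₀pos).2 hfw_le
        have h2 : (0:ℝ) ≤ (‖α‖ + ‖β‖) / s₀ ^ 2 := by positivity
        have := mul_le_mul_of_nonneg_right h1 h2
        exact mul_le_mul_of_nonneg_right this (norm_nonneg u)
    _ = (‖α‖ + ‖β‖) / (1 + ‖f w‖ ^ 2) * ‖u‖ := by rw [hs₀sq, one_mul, hq₀]

lemma vdiff {h g f : ℂ → ℂ} (hf : ∀ z, f z = h z + conj (g z))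
    (hh : DifferentiableOn ℂ h (ball 0 1)) (hg : DifferentiableOn ℂ g (ball 0 1))
    {a z : ℂ} {ρ L : ℝ}
    (hsub : closedBall a ρ ⊆ ball (0:ℂ) 1)
    (hL : ∀ w ∈ closedBall a ρ, (‖deriv h w‖ + ‖deriv g w‖) / (1 + ‖f w‖ ^ 2) ≤ L)
    (hz : z ∈ closedBall a ρ) :
    |(Real.sqrt (1 + ‖f z‖ ^ 2))⁻¹ - (Real.sqrt (1 + ‖f a‖ ^ 2))⁻¹| ≤ L * ρ := by
  have hρ : 0 ≤ ρ := le_trans dist_nonneg (mem_closedBall.1 hz)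
  have ha : a ∈ closedBall a ρ := mem_closedBall_self hρ
  have hex : ∀ w ∈ closedBall a ρ, ∃ L' : ℂ →L[ℝ] ℝ,
      HasFDerivAt (fun z => (Real.sqrt (1 + ‖f z‖ ^ 2))⁻¹) L' w ∧ ‖L'‖ ≤ L := by
    intro w hw
    obtain ⟨L', h1, h2⟩ := vpointX hf
      (hh.differentiableAt (isOpen_ball.mem_nhds (hsub hw)))
      (hg.differentiableAt (isOpen_ball.mem_nhds (hsub hw)))
    exact ⟨L', h1, h2.trans (hL w hw)⟩
  choose! Fd h1 h2 using hex
  have key := Convex.norm_image_sub_le_of_norm_hasFDerivWithin_le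
    (f := fun z => (Real.sqrt (1 + ‖f z‖ ^ 2))⁻¹) (f' := Fd)
    (fun w hw => (h1 w hw).hasFDerivWithinAt) h2 (convex_closedBall a ρ) ha hz
  have hza : ‖z - a‖ ≤ ρ := by simpa [mem_closedBall, dist_eq_norm] using hz
  have hL0 : 0 ≤ L := le_trans (by positivity) (hL a ha)
  calc |(Real.sqrt (1 + ‖f z‖ ^ 2))⁻¹ - (Real.sqrt (1 + ‖f a‖ ^ 2))⁻¹|
      ≤ L * ‖z - a‖ := key
    _ ≤ L * ρ := by gcongr

lemma an_iterate {F : ℂ → ℂ} {s : Set ℂ} (hF : AnalyticOnNhd ℂ F s) (n : ℕ) :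
    AnalyticOnNhd ℂ (deriv^[n] F) s := by
  induction n with
  | zero => exact hF
  | succ n IH =>
    have : deriv^[n + 1] F = deriv (deriv^[n] F) := by
      funext x; exact Function.iterate_succ_apply' deriv n F ▸ rfl
    rw [this]
    exact IH.deriv

set_option maxHeartbeats 2000000 in
/-- If `φ` is smoothly increasing with `1/φ` convex and the harmonic mapping
`f = h + conj g` is `φ`-normal on `𝔻`, then `f^{#(k)}(z)/φ(|z|)^k` is bounded on `𝔻`. -/
theorem stmt4 (φ : ℝ → ℝ) (hφ : SmoothlyIncreasing φ)
    (hconv : ConvexOn ℝ (Set.Ico (0 : ℝ) 1) fun r => (φ r)⁻¹)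
    (k : ℕ) (hk : 1 ≤ k)
    (h g f : ℂ → ℂ)
    (hh : DifferentiableOn ℂ h (ball (0 : ℂ) 1))
    (hg : DifferentiableOn ℂ g (ball (0 : ℂ) 1))
    (hf : ∀ z, f z = h z + conj (g z))
    (hnormal : ∃ C : ℝ, ∀ z ∈ ball (0 : ℂ) 1, sphDeriv h g z / φ ‖z‖ ≤ C) :
    ∃ C : ℝ, ∀ z ∈ ball (0 : ℂ) 1, sphDerivK k h g z / φ ‖z‖ ^ k ≤ C := by
  obtain ⟨m, rfl⟩ : ∃ m, k = m + 1 := ⟨k - 1, by omega⟩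
  obtain ⟨hpos, htend, hunif⟩ := hφ
  obtain ⟨C₀, hC₀⟩ := hnormal
  set C : ℝ := max C₀ 1 with hC
  have hC1 : (1:ℝ) ≤ C := le_max_right _ _
  have hCpos : (0:ℝ) < C := lt_of_lt_of_le one_pos hC1
  -- the key normality bound
  have key : ∀ w ∈ ball (0:ℂ) 1, ‖deriv h w‖ + ‖deriv g w‖ ≤ C * φ ‖w‖ * (1 + ‖f w‖ ^ 2) := by
    intro w hw
    have hw1 : ‖w‖ < 1 := by simpa [mem_ball, dist_eq_norm] using hw
    have hφw : 0 < φ ‖w‖ := hpos _ ⟨norm_nonneg _, hw1⟩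
    have h1 := hC₀ w hw
    rw [div_le_iff₀ hφw] at h1
    have h2 : sphDeriv h g w ≤ C * φ ‖w‖ := by
      have : C₀ * φ ‖w‖ ≤ C * φ ‖w‖ := by
        have : C₀ ≤ C := le_max_left _ _
        nlinarith
      linarith
    have hden : (0:ℝ) < 1 + ‖h w + conj (g w)‖ ^ 2 := by positivity
    rw [sphDeriv, div_le_iff₀ hden] at h2
    have hfw : h w + conj (g w) = f w := (hf w).symm
    rw [hfw] at h2
    exact h2
  -- extract interval for the atTop condition
  have h2' : ∀ᶠ r in nhdsWithin 1 (Set.Iio 1), 2 ≤ φ r * (1 - r) :=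
    htend.eventually_ge_atTop 2
  obtain ⟨l₁, hl₁, hI₁⟩ := mem_nhdsLT_iff_exists_Ioo_subset.1 h2'
  -- extract interval for the uniform condition
  have h3 := (Metric.tendstoUniformlyOn_iff.1
      (hunif (closedBall 0 1) (isCompact_closedBall 0 1))) 1 one_pos
  rw [eventually_comap] at h3
  obtain ⟨l₂, hl₂, hI₂⟩ := mem_nhdsLT_iff_exists_Ioo_subset.1 h3
  -- interior radius
  set r₁ : ℝ := max 0 (max l₁ l₂) with hr₁
  have hr₁0 : 0 ≤ r₁ := le_max_left _ _
  have hr₁1 : r₁ < 1 := by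
    rw [hr₁]
    apply max_lt one_pos
    exact max_lt hl₁ hl₂
  -- interior bounds
  have hhan : AnalyticOnNhd ℂ h (ball 0 1) := hh.analyticOnNhd isOpen_ball
  have hgan : AnalyticOnNhd ℂ g (ball 0 1) := hg.analyticOnNhd isOpen_ball
  have hith : AnalyticOnNhd ℂ (iteratedDeriv (m+1) h) (ball 0 1) := by
    rw [iteratedDeriv_eq_iterate]; exact an_iterate hhan _
  have hitg : AnalyticOnNhd ℂ (iteratedDeriv (m+1) g) (ball 0 1) := by
    rw [iteratedDeriv_eq_iterate]; exact an_iterate hgan _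
  have hsubr₁ : closedBall (0:ℂ) r₁ ⊆ ball 0 1 := closedBall_subset_ball hr₁1
  obtain ⟨Mh, hMh⟩ := (isCompact_closedBall (0:ℂ) r₁).exists_bound_of_continuousOn
    (hith.continuousOn.mono hsubr₁)
  obtain ⟨Mg, hMg⟩ := (isCompact_closedBall (0:ℂ) r₁).exists_bound_of_continuousOn
    (hitg.continuousOn.mono hsubr₁)
  -- lower bound for φ on [0, r₁]
  set ψm : ℝ := max (φ 0)⁻¹ (φ r₁)⁻¹ with hψm
  have hψmpos : 0 < ψm := lt_of_lt_of_le (inv_pos.2 (hpos 0 ⟨le_refl _, one_pos⟩))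
    (le_max_left _ _)
  have hφlow : ∀ t : ℝ, 0 ≤ t → t ≤ r₁ → ψm⁻¹ ≤ φ t := by
    intro t ht0 htr
    have hmem : t ∈ segment ℝ (0:ℝ) r₁ := by
      rw [segment_eq_Icc hr₁0]; exact ⟨ht0, htr⟩
    have := hconv.le_on_segment ⟨le_refl _, one_pos⟩ ⟨hr₁0, hr₁1⟩ hmem
    have hφt : 0 < φ t := hpos t ⟨ht0, lt_of_le_of_lt htr hr₁1⟩
    have h4 : (φ t)⁻¹ ≤ ψm := this
    rw [inv_le_iff_one_le_mul₀ hψmpos]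
    calc (1:ℝ) = φ t * (φ t)⁻¹ := (mul_inv_cancel₀ hφt.ne').symm
      _ ≤ φ t * ψm := by gcongr
      _ = ψm * φ t := mul_comm _ _
      _ ≤ φ t * ψm := le_of_eq (mul_comm _ _)

  -- constants
  obtain ⟨c₁, hc₁pos, hCau⟩ := iterCauchy m
  set c : ℝ := min 1 (1 / (32 * C)) with hc
  have hcpos : 0 < c := lt_min one_pos (by positivity)
  have hc1 : c ≤ 1 := min_le_left _ _
  have hc32 : c ≤ 1 / (32 * C) := min_le_right _ _
  set Cint : ℝ := (Mh + Mg) / (ψm⁻¹) ^ (m+1) with hCint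
  set Cb : ℝ := 16 * c₁ * C / c ^ m with hCb
  refine ⟨max Cint Cb, fun a ha => ?_⟩
  have ha1 : ‖a‖ < 1 := by simpa [mem_ball, dist_eq_norm] using ha
  have hφa : 0 < φ ‖a‖ := hpos _ ⟨norm_nonneg _, ha1⟩
  rcases le_or_gt ‖a‖ r₁ with hcase | hcase
  · -- interior case
    have haK : a ∈ closedBall (0:ℂ) r₁ := by simpa [mem_closedBall, dist_eq_norm] using hcase
    have hnum : ‖iteratedDeriv (m+1) h a‖ + ‖iteratedDeriv (m+1) g a‖ ≤ Mh + Mg :=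
      add_le_add (hMh a haK) (hMg a haK)
    have hnum0 : (0:ℝ) ≤ ‖iteratedDeriv (m+1) h a‖ + ‖iteratedDeriv (m+1) g a‖ := by positivity
    have hden1 : (1:ℝ) ≤ 1 + ‖h a + conj (g a)‖ ^ (m+1+1) := le_add_of_nonneg_right (by positivity)
    have hs : sphDerivK (m+1) h g a ≤ Mh + Mg := by
      rw [sphDerivK]
      exact le_trans (div_le_self hnum0 hden1) hnum
    have hsph0 : 0 ≤ sphDerivK (m+1) h g a := by rw [sphDerivK]; positivity
    refine le_trans ?_ (le_max_left Cint Cb)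
    have hφa' : ψm⁻¹ ≤ φ ‖a‖ := hφlow ‖a‖ (norm_nonneg a) hcase
    rw [hCint]
    have hMM0 : 0 ≤ Mh + Mg := le_trans hnum0 hnum
    have hpow : (0:ℝ) < (ψm⁻¹) ^ (m+1) := by positivity
    have hpow2 : (ψm⁻¹) ^ (m+1) ≤ φ ‖a‖ ^ (m+1) := pow_le_pow_left₀ (by positivity) hφa' _
    exact div_le_div₀ hMM0 hs hpow hpow2
  · -- boundary case: r₁ < ‖a‖ < 1
    have hmem₁ : ‖a‖ ∈ Ioo l₁ 1 :=
      ⟨lt_of_le_of_lt ((le_max_left l₁ l₂).trans (le_max_right 0 _)) hcase, ha1⟩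
    have hmem₂ : ‖a‖ ∈ Ioo l₂ 1 :=
      ⟨lt_of_le_of_lt ((le_max_right l₁ l₂).trans (le_max_right 0 _)) hcase, ha1⟩
    set A : ℝ := φ ‖a‖ with hAdef
    have hA0 : 0 < A := hφa
    have hA2 : 2 ≤ A * (1 - ‖a‖) := hI₁ hmem₁
    have hhalf : A⁻¹ ≤ (1 - ‖a‖) / 2 := by
      have h1 := mul_le_mul_of_nonneg_left hA2 (inv_nonneg.2 hA0.le)
      have h2 : A⁻¹ * A = 1 := inv_mul_cancel₀ hA0.ne'
      nlinarith
    have hfact2 : ∀ w : ℂ, ‖w - a‖ ≤ A⁻¹ → φ ‖w‖ ≤ 2 * A := by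
      intro w hw
      have hAne : (A:ℂ) ≠ 0 := Complex.ofReal_ne_zero.2 hA0.ne'
      have hz1 : (w - a) * (A:ℂ) ∈ closedBall (0:ℂ) 1 := by
        rw [mem_closedBall_zero_iff, norm_mul]
        have hnA : ‖(A:ℂ)‖ = A := by
          rw [Complex.norm_real, Real.norm_eq_abs, abs_of_pos hA0]
        rw [hnA]
        calc ‖w - a‖ * A ≤ A⁻¹ * A := by gcongr
          _ = 1 := inv_mul_cancel₀ hA0.ne'
      have hd := hI₂ hmem₂ a rfl ((w - a) * (A:ℝ)) hz1
      have heq : a + ((w - a) * (A:ℂ)) / (A:ℂ) = w := by field_simp; ring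
      rw [heq, Real.dist_eq] at hd
      have hlt : φ ‖w‖ / A < 2 := by
        rcases abs_lt.1 hd with ⟨hd1, hd2⟩
        linarith
      calc φ ‖w‖ = (φ ‖w‖ / A) * A := by field_simp
        _ ≤ 2 * A := mul_le_mul_of_nonneg_right hlt.le hA0.le
    set T : ℝ := max 1 ‖f a‖ with hTdef
    have hT1 : (1:ℝ) ≤ T := le_max_left _ _
    have hT0 : (0:ℝ) < T := lt_of_lt_of_le one_pos hT1
    set ρ : ℝ := c / (A * T) with hρdef
    have hρpos : 0 < ρ := div_pos hcpos (mul_pos hA0 hT0)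
    have hρA : ρ ≤ A⁻¹ := by
      have : c / (A * T) ≤ 1 / A :=
        div_le_div₀ zero_le_one hc1 hA0 (le_mul_of_one_le_right hA0.le hT1)
      rw [hρdef, ← one_div]
      exact this
    have hsubD : closedBall a ρ ⊆ ball (0:ℂ) 1 := by
      intro w hw
      have hwa : ‖w - a‖ ≤ ρ := by simpa [mem_closedBall, dist_eq_norm] using hw
      have hw2 : ‖w‖ ≤ ‖a‖ + ρ := by
        calc ‖w‖ = ‖w - a + a‖ := by ring_nf
          _ ≤ ‖w - a‖ + ‖a‖ := norm_add_le _ _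
          _ ≤ ρ + ‖a‖ := by linarith
          _ = ‖a‖ + ρ := add_comm _ _
      have hρh : ρ ≤ (1 - ‖a‖) / 2 := le_trans hρA hhalf
      rw [mem_ball, dist_zero_right]
      linarith
    have hφ2A : ∀ w ∈ closedBall a ρ, φ ‖w‖ ≤ 2 * A := fun w hw =>
      hfact2 w (le_trans (by simpa [mem_closedBall, dist_eq_norm] using hw) hρA)
    have hLipBd : ∀ w ∈ closedBall a ρ,
        (‖deriv h w‖ + ‖deriv g w‖) / (1 + ‖f w‖ ^ 2) ≤ 2 * C * A := by
      intro w hw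
      have hden : (0:ℝ) < 1 + ‖f w‖ ^ 2 := by positivity
      rw [div_le_iff₀ hden]
      calc ‖deriv h w‖ + ‖deriv g w‖ ≤ C * φ ‖w‖ * (1 + ‖f w‖ ^ 2) := key w (hsubD hw)
        _ ≤ C * (2 * A) * (1 + ‖f w‖ ^ 2) := by
            have := hφ2A w hw
            gcongr
        _ = 2 * C * A * (1 + ‖f w‖ ^ 2) := by ring
    have hva : (5/8) / T ≤ (Real.sqrt (1 + ‖f a‖ ^ 2))⁻¹ := by
      have hfa : ‖f a‖ ≤ T := le_max_right _ _
      have h1 : 1 + ‖f a‖ ^ 2 ≤ 2 * T ^ 2 := by nlinarith [norm_nonneg (f a)]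
      have h2 : Real.sqrt (1 + ‖f a‖ ^ 2) ≤ Real.sqrt (((8/5) * T) ^ 2) :=
        Real.sqrt_le_sqrt (by nlinarith)
      have h3 : Real.sqrt (((8/5) * T) ^ 2) = (8/5) * T := Real.sqrt_sq (by positivity)
      have h4 : (0:ℝ) < Real.sqrt (1 + ‖f a‖ ^ 2) := Real.sqrt_pos.2 (by positivity)
      have h5 : ((8/5) * T)⁻¹ ≤ (Real.sqrt (1 + ‖f a‖ ^ 2))⁻¹ :=
        inv_anti₀ h4 (h2.trans_eq h3)
      have h6 : (5/8) / T = ((8/5) * T)⁻¹ := by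
        rw [mul_inv, inv_eq_one_div]
        field_simp
      rw [h6]
      exact h5
    have hCAρ : 2 * C * A * ρ ≤ 1 / (16 * T) := by
      have hAρ : A * ρ = c / T := by
        rw [hρdef, ← mul_div_assoc]
        exact mul_div_mul_left c T hA0.ne'
      have he : 2 * C * A * ρ = 2 * C * c / T := by
        calc 2 * C * A * ρ = 2 * C * (A * ρ) := by ring
          _ = 2 * C * (c / T) := by rw [hAρ]
          _ = 2 * C * c / T := by rw [mul_div_assoc]
      rw [he, div_le_div_iff₀ hT0 (by positivity)]
      have h32 : 32 * C * c ≤ 1 := by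
        have := mul_le_mul_of_nonneg_left hc32 (by positivity : (0:ℝ) ≤ 32 * C)
        calc 32 * C * c ≤ 32 * C * (1 / (32 * C)) := this
          _ = 1 := by
              rw [mul_one_div, div_self (by positivity : (32 * C : ℝ) ≠ 0)]
      calc 2 * C * c * (16 * T) = (32 * C * c) * T := by ring
        _ ≤ 1 * T := mul_le_mul_of_nonneg_right h32 hT0.le
    have hvw : ∀ w ∈ closedBall a ρ, 1 + ‖f w‖ ^ 2 ≤ 4 * T ^ 2 := by
      intro w hw
      have hd := vdiff hf hh hg hsubD hLipBd hw
      have habs := abs_le.1 hd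
      have hlow : 1 / (2 * T) ≤ (Real.sqrt (1 + ‖f w‖ ^ 2))⁻¹ := by
        have hstep : (Real.sqrt (1 + ‖f a‖ ^ 2))⁻¹ - 2 * C * A * ρ
            ≤ (Real.sqrt (1 + ‖f w‖ ^ 2))⁻¹ := by linarith [habs.1]
        have hbound : (5/8) / T - 1 / (16 * T) ≤ (Real.sqrt (1 + ‖f w‖ ^ 2))⁻¹ := by
          linarith [hva, hCAρ]
        have harith : 1 / (2 * T) ≤ (5/8) / T - 1 / (16 * T) := by
          rw [div_sub_div _ _ hT0.ne' (by positivity : (16 * T : ℝ) ≠ 0),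
            div_le_div_iff₀ (by positivity) (by positivity)]
          ring_nf
          nlinarith
        linarith
      have h4 : (0:ℝ) < Real.sqrt (1 + ‖f w‖ ^ 2) := Real.sqrt_pos.2 (by positivity)
      have hsq : Real.sqrt (1 + ‖f w‖ ^ 2) ≤ 2 * T := by
        rw [inv_eq_one_div] at hlow
        exact le_of_one_div_le_one_div (by positivity) hlow
      have hss := Real.sq_sqrt (show (0:ℝ) ≤ 1 + ‖f w‖ ^ 2 by positivity)
      nlinarith [Real.sqrt_nonneg (1 + ‖f w‖ ^ 2)]
    have hM : (0:ℝ) ≤ 8 * C * A * T ^ 2 := by positivity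
    have hdbd : ∀ w ∈ ball a ρ, ‖deriv h w‖ + ‖deriv g w‖ ≤ 8 * C * A * T ^ 2 := by
      intro w hw
      have hw' := ball_subset_closedBall hw
      have h1 := hLipBd w hw'
      rw [div_le_iff₀ (by positivity : (0:ℝ) < 1 + ‖f w‖ ^ 2)] at h1
      calc ‖deriv h w‖ + ‖deriv g w‖ ≤ 2 * C * A * (1 + ‖f w‖ ^ 2) := h1
        _ ≤ 2 * C * A * (4 * T ^ 2) := by
            have := hvw w hw'
            gcongr
        _ = 8 * C * A * T ^ 2 := by ring
    have hdh : ∀ w ∈ ball a ρ, ‖deriv h w‖ ≤ 8 * C * A * T ^ 2 := fun w hw =>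
      le_trans (le_add_of_nonneg_right (norm_nonneg _)) (hdbd w hw)
    have hdg : ∀ w ∈ ball a ρ, ‖deriv g w‖ ≤ 8 * C * A * T ^ 2 := fun w hw =>
      le_trans (le_add_of_nonneg_left (norm_nonneg _)) (hdbd w hw)
    have hsubB : ball a ρ ⊆ ball (0:ℂ) 1 := ball_subset_closedBall.trans hsubD
    have hdiffh : DifferentiableOn ℂ (deriv h) (ball a ρ) :=
      hhan.deriv.differentiableOn.mono hsubB
    have hdiffg : DifferentiableOn ℂ (deriv g) (ball a ρ) :=
      hgan.deriv.differentiableOn.mono hsubB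
    have cauh := hCau (deriv h) a ρ _ hρpos hM hdiffh hdh
    have caug := hCau (deriv g) a ρ _ hρpos hM hdiffg hdg
    rw [← iteratedDeriv_succ'] at cauh caug
    have hρm : ρ ^ m = c ^ m / (A * T) ^ m := by rw [hρdef, div_pow]
    have hval : 2 * (c₁ * (8 * C * A * T ^ 2) / ρ ^ m) = Cb * (A ^ (m+1) * T ^ (m+1+1)) := by
      rw [hρm, hCb]
      field_simp
      ring
    have hsphle : sphDerivK (m+1) h g a ≤ Cb * A ^ (m+1) := by
      rw [sphDerivK]
      have hfa : h a + conj (g a) = f a := (hf a).symm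
      rw [hfa]
      have hTden : T ^ (m+1+1) ≤ 1 + ‖f a‖ ^ (m+1+1) := by
        rcases le_total ‖f a‖ 1 with hfa1 | hfa1
        · rw [hTdef, max_eq_left hfa1, one_pow]
          exact le_add_of_nonneg_right (by positivity)
        · rw [hTdef, max_eq_right hfa1]
          exact le_add_of_nonneg_left zero_le_one
      have hden0 : (0:ℝ) < 1 + ‖f a‖ ^ (m+1+1) := by positivity
      rw [div_le_iff₀ hden0]
      have hCbpos : 0 < Cb := by rw [hCb]; positivity
      calc ‖iteratedDeriv (m+1) h a‖ + ‖iteratedDeriv (m+1) g a‖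
          ≤ 2 * (c₁ * (8 * C * A * T ^ 2) / ρ ^ m) := by linarith
        _ = Cb * (A ^ (m+1) * T ^ (m+1+1)) := hval
        _ ≤ Cb * (A ^ (m+1) * (1 + ‖f a‖ ^ (m+1+1))) := by gcongr
        _ = Cb * A ^ (m+1) * (1 + ‖f a‖ ^ (m+1+1)) := by ring
    refine le_trans ?_ (le_max_right Cint Cb)
    rw [div_le_iff₀ (pow_pos hφa _)]
    exact hsphle
end

section
/- Let {f_n} be a sequence of sense-preserving harmonic mappings on the open unit disk 𝔻 such that f_n converges locally uniformly on 𝔻 to a sense-preserving harmonic mapping f. Then a point z₀ ∈ 𝔻 is a zero of f if and only if z₀ is a cluster point of the zeros of the mappings f_n, n ≥ 1 (i.e., there exist indices n_k → ∞ and points w_k → z₀ with f_{n_k}(w_k) = 0). -/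
open Complex Metric Set Filter ComplexConjugate

noncomputable def Lmap (a b : ℂ) : ℂ →L[ℝ] ℂ :=
  ((ContinuousLinearMap.mul ℂ ℂ a).restrictScalars ℝ) +
    (Complex.conjCLE.toContinuousLinearMap).comp ((ContinuousLinearMap.mul ℂ ℂ b).restrictScalars ℝ)

lemma Lmap_apply (a b w : ℂ) : Lmap a b w = a * w + conj (b * w) := rfl

lemma Lmap_norm_le (a b : ℂ) : ‖Lmap a b‖ ≤ ‖a‖ + ‖b‖ := by
  refine ContinuousLinearMap.opNorm_le_bound _ (by positivity) fun w => ?_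
  rw [Lmap_apply]
  calc ‖a * w + conj (b * w)‖ ≤ ‖a * w‖ + ‖conj (b * w)‖ := norm_add_le _ _
  _ = ‖a‖ * ‖w‖ + ‖b‖ * ‖w‖ := by simp [norm_mul]
  _ = (‖a‖ + ‖b‖) * ‖w‖ := by ring

lemma normSq_sub_ne (a b : ℂ) (hab : ‖b‖ < ‖a‖) : ((normSq a : ℂ) - normSq b) ≠ 0 := by
  rw [sub_ne_zero]
  intro hcon
  have h0 : (normSq a : ℝ) = normSq b := by exact_mod_cast hcon
  have h2 : ‖b‖ ^ 2 < ‖a‖ ^ 2 := by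
    have := norm_nonneg b
    nlinarith
  rw [← Complex.sq_norm, ← Complex.sq_norm] at h0
  nlinarith

lemma Lmap_inverse (a b : ℂ) (hab : ‖b‖ < ‖a‖) (w : ℂ) :
    Lmap ((conj a) / ((normSq a : ℂ) - normSq b)) (-b / ((normSq a : ℂ) - normSq b))
      (Lmap a b w) = w := by
  have hd := normSq_sub_ne a b hab
  simp only [Lmap_apply, map_mul, map_add, map_div₀, map_neg, Complex.conj_conj, map_sub]
  have h1 : conj ((normSq a : ℂ)) = (normSq a : ℂ) := by simp [Complex.conj_ofReal]
  have h2 : conj ((normSq b : ℂ)) = (normSq b : ℂ) := by simp [Complex.conj_ofReal]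
  rw [h1, h2]
  have ha : (normSq a : ℂ) = a * conj a := by rw [Complex.mul_conj]
  have hb : (normSq b : ℂ) = b * conj b := by rw [Complex.mul_conj]
  field_simp
  rw [ha, hb]
  ring

lemma Lmap_inverse' (a b : ℂ) (hab : ‖b‖ < ‖a‖) (v : ℂ) :
    Lmap a b (Lmap ((conj a) / ((normSq a : ℂ) - normSq b))
      (-b / ((normSq a : ℂ) - normSq b)) v) = v := by
  have hd := normSq_sub_ne a b hab
  simp only [Lmap_apply, map_mul, map_add, map_div₀, map_neg, Complex.conj_conj, map_sub]
  have h1 : conj ((normSq a : ℂ)) = (normSq a : ℂ) := by simp [Complex.conj_ofReal]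
  have h2 : conj ((normSq b : ℂ)) = (normSq b : ℂ) := by simp [Complex.conj_ofReal]
  rw [h1, h2]
  have ha : (normSq a : ℂ) = a * conj a := by rw [Complex.mul_conj]
  have hb : (normSq b : ℂ) = b * conj b := by rw [Complex.mul_conj]
  field_simp
  rw [ha, hb]
  ring

noncomputable def Lequiv (a b : ℂ) (hab : ‖b‖ < ‖a‖) : ℂ ≃L[ℝ] ℂ :=
  ContinuousLinearEquiv.equivOfInverse (Lmap a b)
    (Lmap ((conj a) / ((normSq a : ℂ) - normSq b)) (-b / ((normSq a : ℂ) - normSq b)))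
    (Lmap_inverse a b hab) (Lmap_inverse' a b hab)

lemma Lequiv_coe (a b : ℂ) (hab : ‖b‖ < ‖a‖) :
    (Lequiv a b hab : ℂ →L[ℝ] ℂ) = Lmap a b := rfl

lemma hasFDerivAt_harm {p q : ℂ → ℂ} {x a b : ℂ} (hp : HasDerivAt p a x) (hq : HasDerivAt q b x) :
    HasFDerivAt (fun z => p z + conj (q z)) (Lmap a b) x := by
  have h1 : HasFDerivAt p (((1 : ℂ →L[ℂ] ℂ).smulRight a).restrictScalars ℝ) x :=
    (hp.hasFDerivAt).restrictScalars ℝ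
  have h2 : HasFDerivAt q (((1 : ℂ →L[ℂ] ℂ).smulRight b).restrictScalars ℝ) x :=
    (hq.hasFDerivAt).restrictScalars ℝ
  have h3 := (Complex.conjCLE.toContinuousLinearMap.hasFDerivAt).comp x h2
  have h4 := h1.add h3
  refine h4.congr_fderiv ?_
  ext w
  simp [Lmap_apply, mul_comm]

lemma hasStrictFDerivAt_harm {p q : ℂ → ℂ} {x a b : ℂ}
    (hp : HasStrictDerivAt p a x) (hq : HasStrictDerivAt q b x) :
    HasStrictFDerivAt (fun z => p z + conj (q z)) (Lmap a b) x := by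
  have h1 : HasStrictFDerivAt p (((1 : ℂ →L[ℂ] ℂ).smulRight a).restrictScalars ℝ) x :=
    (hp.hasStrictFDerivAt).restrictScalars ℝ
  have h2 : HasStrictFDerivAt q (((1 : ℂ →L[ℂ] ℂ).smulRight b).restrictScalars ℝ) x :=
    (hq.hasStrictFDerivAt).restrictScalars ℝ
  have h3 := (Complex.conjCLE.toContinuousLinearMap.hasStrictFDerivAt).comp x h2
  have h4 := h1.add h3
  refine h4.congr_fderiv ?_
  ext w
  simp [Lmap_apply, mul_comm]

lemma conj_circleIntegral_eq_zero {ψ : ℂ → ℂ} {z : ℂ} {r : ℝ} (hr : 0 < r)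
    (hψ : DiffContOnCl ℂ ψ (ball z r)) :
    (∮ w in C(z, r), (w - z) ^ (-2 : ℤ) • conj (ψ w)) = 0 := by
  have hccl : ContinuousOn ψ (closedBall z r) := by
    have := hψ.continuousOn
    rwa [closure_ball z hr.ne'] at this
  have h0 : (∮ w in C(z, r), ψ w) = 0 := by
    refine circleIntegral_eq_zero_of_differentiable_on_off_countable hr.le Set.countable_empty
      hccl fun w hw => ?_
    exact hψ.differentiableOn.differentiableAt (isOpen_ball.mem_nhds hw.1)
  set k : ℂ := -((r : ℂ) ^ (2:ℕ))⁻¹ with hk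
  have hcm : ∀ θ : ℝ, circleMap 0 r θ * conj (circleMap 0 r θ) = (r : ℂ) ^ (2:ℕ) := by
    intro θ
    rw [Complex.mul_conj]
    norm_cast
    rw [Complex.normSq_eq_norm_sq, norm_circleMap_zero, abs_of_pos hr]
  have hne : ∀ θ : ℝ, circleMap 0 r θ ≠ 0 := fun θ => circleMap_ne_center hr.ne'
  have hr2 : ((r:ℂ) ^ (2:ℕ)) ≠ 0 := pow_ne_zero _ (Complex.ofReal_ne_zero.2 hr.ne')
  have key : ∀ θ : ℝ,
      deriv (circleMap z r) θ • ((circleMap z r θ - z) ^ (-2 : ℤ) • conj (ψ (circleMap z r θ)))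
      = conj (k • (deriv (circleMap z r) θ • ψ (circleMap z r θ))) := by
    intro θ
    set c := circleMap 0 r θ with hc
    have hder : deriv (circleMap z r) θ = c * Complex.I := by
      rw [deriv_circleMap]
    rw [hder, circleMap_sub_center]
    simp only [smul_eq_mul, map_mul, map_neg, map_inv₀, Complex.conj_I, hk]
    have hconjr : conj ((r:ℂ) ^ (2:ℕ)) = (r:ℂ)^(2:ℕ) := by
      norm_cast
      simp [Complex.conj_ofReal]
    rw [← hc]
    have h1 : (c : ℂ) ^ (-2 : ℤ) = (c^(2:ℕ))⁻¹ := by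
      rw [zpow_neg]
      norm_cast
    rw [h1]
    have h2 : conj c = ((r:ℂ)^(2:ℕ)) / c := by
      rw [eq_div_iff (hne θ), mul_comm]
      exact hcm θ
    rw [hconjr, h2]
    field_simp [hne θ]
    rw [mul_div_mul_right _ _ (Complex.ofReal_ne_zero.2 hr.ne')]
  calc (∮ w in C(z, r), (w - z) ^ (-2 : ℤ) • conj (ψ w))
      = ∫ θ in (0:ℝ)..(2*Real.pi), conj (k • (deriv (circleMap z r) θ • ψ (circleMap z r θ))) := by
        simp only [circleIntegral]
        exact intervalIntegral.integral_congr fun θ _ => key θ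
    _ = 0 := by
        have hcont : Continuous fun θ : ℝ => k • (deriv (circleMap z r) θ • ψ (circleMap z r θ)) := by
          have h1 : Continuous fun θ : ℝ => deriv (circleMap z r) θ := by
            simp only [deriv_circleMap]
            exact (continuous_circleMap 0 r).mul continuous_const
          have h2 : Continuous fun θ : ℝ => ψ (circleMap z r θ) := by
            refine hccl.comp_continuous (continuous_circleMap z r) fun θ => ?_
            exact sphere_subset_closedBall (circleMap_mem_sphere z hr.le θ)
          exact ((h1.smul h2)).const_smul k
        have hint : IntervalIntegrable
            (fun θ : ℝ => k • (deriv (circleMap z r) θ • ψ (circleMap z r θ)))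
            MeasureTheory.volume 0 (2*Real.pi) := hcont.intervalIntegrable _ _
        have := (Complex.conjCLE.toContinuousLinearMap).intervalIntegral_comp_comm hint
        have hconv : (fun θ : ℝ => conj (k • (deriv (circleMap z r) θ • ψ (circleMap z r θ))))
            = fun θ => Complex.conjCLE.toContinuousLinearMap
                (k • (deriv (circleMap z r) θ • ψ (circleMap z r θ))) := rfl
        rw [hconv]
        erw [this]
        have : (∫ θ in (0:ℝ)..(2*Real.pi), k • (deriv (circleMap z r) θ • ψ (circleMap z r θ)))
            = k • ∮ w in C(z, r), ψ w := by
          rw [intervalIntegral.integral_smul]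
          rfl
        rw [this, h0, smul_zero]
        simp

lemma harm_deriv_bound {φ ψ : ℂ → ℂ} {z : ℂ} {r C : ℝ} (hr : 0 < r)
    (hφ : DiffContOnCl ℂ φ (ball z r)) (hψ : DiffContOnCl ℂ ψ (ball z r))
    (hC : ∀ w ∈ sphere z r, ‖φ w + conj (ψ w)‖ ≤ C) :
    ‖deriv φ z‖ ≤ C / r := by
  have hsub : sphere z r ⊆ closedBall z r := sphere_subset_closedBall
  have hφc : ContinuousOn φ (sphere z r) := by
    have := hφ.continuousOn
    rw [closure_ball z hr.ne'] at this
    exact this.mono hsub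
  have hψc : ContinuousOn ψ (sphere z r) := by
    have := hψ.continuousOn
    rw [closure_ball z hr.ne'] at this
    exact this.mono hsub
  have hker : ContinuousOn (fun w : ℂ => (w - z) ^ (-2 : ℤ)) (sphere z r) := by
    refine ContinuousOn.zpow₀ (continuousOn_id.sub continuousOn_const) _ fun w hw => Or.inl ?_
    have : dist w z = r := mem_sphere.mp hw
    intro h0
    simp only [Pi.sub_apply, id_eq, sub_eq_zero] at h0
    subst h0
    simp at this
    exact hr.ne' this.symm
  have hint1 : CircleIntegrable (fun w => (w - z) ^ (-2 : ℤ) • φ w) z r :=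
    (hker.smul hφc).circleIntegrable hr.le
  have hint2 : CircleIntegrable (fun w => (w - z) ^ (-2 : ℤ) • conj (ψ w)) z r := by
    refine (hker.smul ?_).circleIntegrable hr.le
    exact Complex.continuous_conj.comp_continuousOn hψc
  have huc : ContinuousOn (fun w : ℂ => φ w + conj (ψ w)) (sphere z r) :=
    hφc.add (Complex.continuous_conj.comp_continuousOn hψc)
  have hintu : CircleIntegrable (fun w => (w - z) ^ (-2 : ℤ) • (φ w + conj (ψ w))) z r :=
    (hker.smul huc).circleIntegrable hr.le
  have hsplit : (∮ w in C(z, r), (w - z) ^ (-2 : ℤ) • φ w)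
      = (∮ w in C(z, r), (w - z) ^ (-2 : ℤ) • (φ w + conj (ψ w)))
        - ∮ w in C(z, r), (w - z) ^ (-2 : ℤ) • conj (ψ w) := by
    rw [← circleIntegral.integral_sub hintu hint2]
    refine circleIntegral.integral_congr hr.le fun w hw => ?_
    simp only [smul_eq_mul, mul_add]
    ring
  have hderiv : deriv φ z = (2 * Real.pi * Complex.I : ℂ)⁻¹ •
      ∮ w in C(z, r), (w - z) ^ (-2 : ℤ) • (φ w + conj (ψ w)) := by
    have hcif := hφ.deriv_eq_smul_circleIntegral hr
    have heq : (∮ w in C(z, r), (w - z) ^ (-2 : ℤ) • φ w)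
        = ∮ w in C(z, r), (1 / (w - z) ^ 2) • φ w := by
      congr 1
      funext w
      simp [zpow_neg]
    have := hsplit
    rw [conj_circleIntegral_eq_zero hr hψ, sub_zero, heq, hcif] at this
    rw [← this, smul_smul, inv_mul_cancel₀ Complex.two_pi_I_ne_zero, one_smul]
  have hbound : ∀ w ∈ sphere z r,
      ‖(w - z) ^ (-2 : ℤ) • (φ w + conj (ψ w))‖ ≤ C / (r * r) := by
    intro w hw
    have habs : ‖w - z‖ = r := by
      have : dist w z = r := mem_sphere.mp hw
      rwa [Complex.dist_eq] at this
    rw [norm_smul]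
    have h1 : ‖(w - z) ^ (-2 : ℤ)‖ = (r * r)⁻¹ := by
      rw [norm_zpow, habs, zpow_neg, zpow_two]
    rw [h1, div_eq_inv_mul]
    exact mul_le_mul_of_nonneg_left (hC w hw) (inv_nonneg.2 (mul_pos hr hr).le)
  calc ‖deriv φ z‖ = ‖(2 * Real.pi * Complex.I : ℂ)⁻¹ •
      ∮ w in C(z, r), (w - z) ^ (-2 : ℤ) • (φ w + conj (ψ w))‖ := by rw [hderiv]
    _ ≤ r * (C / (r * r)) :=
      circleIntegral.norm_two_pi_i_inv_smul_integral_le_of_norm_le_const hr.le hbound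
    _ = C / r := by
      field_simp

lemma deriv_diff_bound {φ ψ : ℂ → ℂ} {w : ℂ} {r C : ℝ} (hr : 0 < r)
    (hφ : DifferentiableOn ℂ φ (ball (0:ℂ) 1)) (hψ : DifferentiableOn ℂ ψ (ball (0:ℂ) 1))
    (hsub : closedBall w r ⊆ ball (0:ℂ) 1)
    (hC : ∀ x ∈ closedBall w r, ‖φ x + conj (ψ x)‖ ≤ C) :
    ‖deriv φ w‖ ≤ C / r := by
  have hsub' : ball w r ⊆ ball (0:ℂ) 1 := ball_subset_closedBall.trans hsub
  have hφ' : DiffContOnCl ℂ φ (ball w r) :=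
    ⟨hφ.mono hsub', by
      rw [closure_ball w hr.ne']
      exact (hφ.continuousOn).mono hsub⟩
  have hψ' : DiffContOnCl ℂ ψ (ball w r) :=
    ⟨hψ.mono hsub', by
      rw [closure_ball w hr.ne']
      exact (hψ.continuousOn).mono hsub⟩
  exact harm_deriv_bound hr hφ' hψ' fun x hx => hC x (sphere_subset_closedBall hx)

lemma harm_lipschitz {p q : ℂ → ℂ} {s : Set ℂ} (hcv : Convex ℝ s) (hso : s ⊆ ball (0:ℂ) 1)
    (hp : DifferentiableOn ℂ p (ball (0:ℂ) 1)) (hq : DifferentiableOn ℂ q (ball (0:ℂ) 1))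
    {ℓ : ℝ} (hℓ : ∀ x ∈ s, ‖deriv p x‖ + ‖deriv q x‖ ≤ ℓ)
    {x y : ℂ} (hx : x ∈ s) (hy : y ∈ s) :
    ‖(p y + conj (q y)) - (p x + conj (q x))‖ ≤ ℓ * ‖y - x‖ := by
  have hdF : ∀ t ∈ s, HasFDerivAt (fun z => p z + conj (q z))
      (Lmap (deriv p t) (deriv q t)) t := by
    intro t ht
    have hpt : HasDerivAt p (deriv p t) t :=
      (hp.differentiableAt (isOpen_ball.mem_nhds (hso ht))).hasDerivAt
    have hqt : HasDerivAt q (deriv q t) t :=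
      (hq.differentiableAt (isOpen_ball.mem_nhds (hso ht))).hasDerivAt
    exact hasFDerivAt_harm hpt hqt
  refine Convex.norm_image_sub_le_of_norm_fderiv_le
    (fun t ht => (hdF t ht).differentiableAt) (fun t ht => ?_) hcv hx hy
  rw [(hdF t ht).fderiv]
  exact (Lmap_norm_le _ _).trans (hℓ t ht)

/-- Hurwitz-type theorem for harmonic mappings: if sense-preserving harmonic mappings
`fₙ = hₙ + conj gₙ` converge locally uniformly on `𝔻` to a sense-preserving harmonic
mapping `f = h + conj g`, then `z₀ ∈ 𝔻` is a zero of `f` iff `z₀` is a cluster point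
of zeros of the `fₙ`. -/
theorem stmt12 (hn gn : ℕ → ℂ → ℂ) (h g : ℂ → ℂ)
    (hhn : ∀ n, DifferentiableOn ℂ (hn n) (ball (0 : ℂ) 1))
    (hgn : ∀ n, DifferentiableOn ℂ (gn n) (ball (0 : ℂ) 1))
    (hspn : ∀ n, ∀ z ∈ ball (0 : ℂ) 1, deriv (hn n) z ≠ 0 ∧ ‖deriv (gn n) z‖ < ‖deriv (hn n) z‖)
    (hh : DifferentiableOn ℂ h (ball (0 : ℂ) 1))
    (hg : DifferentiableOn ℂ g (ball (0 : ℂ) 1))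
    (hsp : ∀ z ∈ ball (0 : ℂ) 1, deriv h z ≠ 0 ∧ ‖deriv g z‖ < ‖deriv h z‖)
    (hconv : TendstoLocallyUniformlyOn (fun n z => hn n z + conj (gn n z))
      (fun z => h z + conj (g z)) atTop (ball (0 : ℂ) 1))
    (z₀ : ℂ) (hz₀ : z₀ ∈ ball (0 : ℂ) 1) :
    h z₀ + conj (g z₀) = 0 ↔
      ∃ (nk : ℕ → ℕ) (w : ℕ → ℂ), StrictMono nk ∧ (∀ k, w k ∈ ball (0 : ℂ) 1) ∧
        Tendsto w atTop (nhds z₀) ∧ ∀ k, hn (nk k) (w k) + conj (gn (nk k) (w k)) = 0 := by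
  set f : ℂ → ℂ := fun z => h z + conj (g z) with hfdef
  set fN : ℕ → ℂ → ℂ := fun n z => hn n z + conj (gn n z) with hfNdef
  -- a closed ball around z₀ inside the unit disk
  obtain ⟨δ₁, hδ₁pos, hδ₁sub⟩ := Metric.isOpen_iff.mp isOpen_ball z₀ hz₀
  set δ₀ : ℝ := δ₁ / 2 with hδ₀def
  have hδ₀pos : 0 < δ₀ := by positivity
  have hδ₀sub : closedBall z₀ δ₀ ⊆ ball (0 : ℂ) 1 := by
    refine (closedBall_subset_ball ?_).trans hδ₁sub
    simp [hδ₀def]; linarith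
  have hδhalf : closedBall z₀ (δ₀ / 2) ⊆ ball (0 : ℂ) 1 :=
    (closedBall_subset_closedBall (by linarith)).trans hδ₀sub
  have hTU : TendstoUniformlyOn fN f atTop (closedBall z₀ δ₀) :=
    (tendstoLocallyUniformlyOn_iff_forall_isCompact isOpen_ball).mp hconv _
      hδ₀sub (isCompact_closedBall _ _)
  have hfc : ContinuousAt f z₀ := by
    have : ContinuousOn f (ball (0:ℂ) 1) :=
      (hh.continuousOn).add (Complex.continuous_conj.comp_continuousOn hg.continuousOn)
    exact this.continuousAt (isOpen_ball.mem_nhds hz₀)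
  constructor
  · intro hfz0
    have hfz0' : f z₀ = 0 := hfz0
    have hmem := isOpen_ball.mem_nhds hz₀
    have hab := (hsp z₀ hz₀).2
    have hsa : HasStrictDerivAt h (deriv h z₀) z₀ := by
      have := ((hh.analyticAt hmem).hasStrictFDerivAt).hasStrictDerivAt
      rwa [fderiv_apply_one_eq_deriv] at this
    have hsb : HasStrictDerivAt g (deriv g z₀) z₀ := by
      have := ((hg.analyticAt hmem).hasStrictFDerivAt).hasStrictDerivAt
      rwa [fderiv_apply_one_eq_deriv] at this
    have hstrict : HasStrictFDerivAt f
        ((Lequiv (deriv h z₀) (deriv g z₀) hab : ℂ ≃L[ℝ] ℂ) : ℂ →L[ℝ] ℂ) z₀ := by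
      rw [Lequiv_coe]
      exact hasStrictFDerivAt_harm hsa hsb
    set φinv : ℂ → ℂ := hstrict.localInverse f _ z₀ with hφinvdef
    have hinv0 : φinv (f z₀) = z₀ := hstrict.localInverse_apply_image
    obtain ⟨Kl, sinv, hsinvmem, hLip⟩ := (hstrict.to_localInverse).exists_lipschitzOnWith
    have hright : ∀ᶠ y in nhds (f z₀), f (φinv y) = y := hstrict.eventually_right_inverse
    rw [hfz0'] at hsinvmem hright hinv0
    have hmem2 : sinv ∩ {y : ℂ | f (φinv y) = y} ∈ nhds (0:ℂ) :=
      Filter.inter_mem hsinvmem (Filter.eventually_iff.mp hright)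
    obtain ⟨ρ, hρpos, hρsub⟩ := Metric.mem_nhds_iff.mp hmem2
    set K : ℝ := (Kl : ℝ) + 1 with hKdef
    have hKpos : 0 < K := by positivity
    have hLip' : ∀ y ∈ sinv, ∀ y' ∈ sinv, dist (φinv y) (φinv y') ≤ K * dist y y' := by
      intro y hy y' hy'
      have h1 := hLip.dist_le_mul y hy y' hy'
      have h2 : (Kl : ℝ) ≤ K := by simp [hKdef]
      exact h1.trans (mul_le_mul_of_nonneg_right h2 dist_nonneg)
    have hsup : ∀ η : ℝ, 0 < η →
        ∀ᶠ n in atTop, ∀ x ∈ closedBall z₀ δ₀, ‖f x - fN n x‖ ≤ η := by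
      intro η hη
      filter_upwards [Metric.tendstoUniformlyOn_iff.mp hTU η hη] with n hb x hx
      have := hb x hx
      rw [dist_eq_norm] at this
      exact this.le
    have hder : ∀ η : ℝ, 0 < η → ∀ᶠ n in atTop, ∀ x ∈ closedBall z₀ (δ₀/2),
        ‖deriv (fun t => h t - hn n t) x‖ + ‖deriv (fun t => g t - gn n t) x‖ ≤ η := by
      intro η hη
      have hη2 : 0 < η * (δ₀/2) / 2 := by positivity
      filter_upwards [hsup _ hη2] with n hbnd x hx
      have hsubx : closedBall x (δ₀/2) ⊆ ball (0:ℂ) 1 := by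
        intro t ht
        refine hδ₀sub (mem_closedBall.mpr ?_)
        calc dist t z₀ ≤ dist t x + dist x z₀ := dist_triangle _ _ _
          _ ≤ δ₀/2 + δ₀/2 := add_le_add (mem_closedBall.mp ht) (mem_closedBall.mp hx)
          _ = δ₀ := by ring
      have htK : ∀ t ∈ closedBall x (δ₀/2), t ∈ closedBall z₀ δ₀ := by
        intro t ht
        refine mem_closedBall.mpr ?_
        calc dist t z₀ ≤ dist t x + dist x z₀ := dist_triangle _ _ _
          _ ≤ δ₀/2 + δ₀/2 := add_le_add (mem_closedBall.mp ht) (mem_closedBall.mp hx)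
          _ = δ₀ := by ring
      have hCb : ∀ t ∈ closedBall x (δ₀/2),
          ‖(h t - hn n t) + conj (g t - gn n t)‖ ≤ η * (δ₀/2) / 2 := by
        intro t ht
        have heq : (h t - hn n t) + conj (g t - gn n t) = f t - fN n t := by
          simp only [hfdef, hfNdef, map_sub]
          ring
        rw [heq]
        exact hbnd t (htK t ht)
      have hCb' : ∀ t ∈ closedBall x (δ₀/2),
          ‖(g t - gn n t) + conj (h t - hn n t)‖ ≤ η * (δ₀/2) / 2 := by
        intro t ht
        have heq : (g t - gn n t) + conj (h t - hn n t)
            = conj ((h t - hn n t) + conj (g t - gn n t)) := by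
          simp only [map_add, map_sub, Complex.conj_conj]
          ring
        rw [heq, RCLike.norm_conj]
        exact hCb t ht
      have hhalf : 0 < δ₀/2 := by positivity
      have h1 := deriv_diff_bound hhalf (hh.sub (hhn n)) (hg.sub (hgn n)) hsubx hCb
      have h2 := deriv_diff_bound hhalf (hg.sub (hgn n)) (hh.sub (hhn n)) hsubx hCb'
      have hcalc : η * (δ₀/2) / 2 / (δ₀/2) = η / 2 := by
        field_simp
      rw [hcalc] at h1 h2
      rw [Pi.sub_def] at h1 h2
      linarith
    have key : ∀ ε : ℝ, 0 < ε → ε ≤ δ₀/2 →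
        ∀ᶠ n in atTop, ∃ x ∈ closedBall z₀ ε, fN n x = 0 := by
      intro ε hεpos hεle
      have hm1 : 0 < min (ε/(2*K)) (ρ/2) := by positivity
      have hη : (0:ℝ) < 1/(2*K) := by positivity
      filter_upwards [hsup _ hm1, hder _ hη] with n hb hd
      set s : Set ℂ := closedBall z₀ ε with hsdef
      have hsK : s ⊆ closedBall z₀ (δ₀/2) := closedBall_subset_closedBall hεle
      have hsb1 : s ⊆ ball (0:ℂ) 1 := hsK.trans hδhalf
      have hsδ : s ⊆ closedBall z₀ δ₀ :=
        closedBall_subset_closedBall (hεle.trans (by linarith))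
      set u : ℂ → ℂ := fun x => f x - fN n x with hudef
      have hun : ∀ x ∈ s, ‖u x‖ ≤ min (ε/(2*K)) (ρ/2) := fun x hx => hb x (hsδ hx)
      have humem : ∀ x ∈ s, u x ∈ ball (0:ℂ) ρ := by
        intro x hx
        rw [mem_ball_zero_iff]
        exact lt_of_le_of_lt ((hun x hx).trans (min_le_right _ _)) (by linarith)
      have h0mem : (0:ℂ) ∈ ball (0:ℂ) ρ := mem_ball_self hρpos
      set T : ℂ → ℂ := fun x => φinv (u x) with hTdef
      have hTdist : ∀ x ∈ s, dist (T x) z₀ ≤ ε/2 := by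
        intro x hx
        have hx1 : u x ∈ sinv := (hρsub (humem x hx)).1
        have h01 : (0:ℂ) ∈ sinv := (hρsub h0mem).1
        calc dist (T x) z₀ = dist (φinv (u x)) (φinv 0) := by rw [hinv0]
          _ ≤ K * dist (u x) 0 := hLip' _ hx1 _ h01
          _ = K * ‖u x‖ := by rw [dist_zero_right]
          _ ≤ K * (ε/(2*K)) := by
              refine mul_le_mul_of_nonneg_left ?_ hKpos.le
              exact (hun x hx).trans (min_le_left _ _)
          _ = ε/2 := by field_simp
      have hmaps : MapsTo T s s := by
        intro x hx
        have := hTdist x hx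
        rw [hsdef, mem_closedBall]
        linarith
      have hueq : ∀ t : ℂ, u t = (h t - hn n t) + conj (g t - gn n t) := by
        intro t
        simp only [hudef, hfdef, hfNdef, map_sub]
        ring
      have hcontr : ∀ x ∈ s, ∀ y ∈ s, dist (T x) (T y) ≤ (1/2) * dist x y := by
        intro x hx y hy
        have h1 : dist (T x) (T y) ≤ K * dist (u x) (u y) :=
          hLip' _ (hρsub (humem x hx)).1 _ (hρsub (humem y hy)).1
        have h2 : dist (u x) (u y) ≤ (1/(2*K)) * dist x y := by
          rw [dist_eq_norm, dist_eq_norm]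
          have h3 := harm_lipschitz (convex_closedBall z₀ ε) hsb1
            (hh.sub (hhn n)) (hg.sub (hgn n))
            (fun t ht => hd t (hsK ht)) hy hx
          calc ‖u x - u y‖
              = ‖((h x - hn n x) + conj (g x - gn n x))
                - ((h y - hn n y) + conj (g y - gn n y))‖ := by rw [hueq, hueq]
            _ ≤ (1/(2*K)) * ‖x - y‖ := h3
        calc dist (T x) (T y) ≤ K * ((1/(2*K)) * dist x y) :=
              h1.trans (mul_le_mul_of_nonneg_left h2 hKpos.le)
          _ = (1/2) * dist x y := by field_simp
      have hsc : IsComplete s := isClosed_closedBall.isComplete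
      have hcw : ContractingWith (1/2 : NNReal) (hmaps.restrict T s s) := by
        constructor
        · exact_mod_cast (by norm_num : ((1/2 : NNReal) : ℝ) < 1)
        · refine LipschitzWith.of_dist_le_mul ?_
          rintro ⟨x, hx⟩ ⟨y, hy⟩
          have := hcontr x hx y hy
          simpa [Subtype.dist_eq, MapsTo.val_restrict_apply] using this
      obtain ⟨y, hys, hfix, -, -⟩ := hcw.exists_fixedPoint' hsc hmaps
        (mem_closedBall_self hεpos.le) (edist_ne_top _ _)
      refine ⟨y, hys, ?_⟩
      have hr1 : f (φinv (u y)) = u y := (hρsub (humem y hys)).2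
      have hfixy : T y = y := hfix
      rw [show φinv (u y) = T y from rfl, hfixy] at hr1
      have h2 : fN n y = f y - (f y - fN n y) := by ring
      rw [show f y - fN n y = u y from rfl, ← hr1] at h2
      simpa using h2
    have keym : ∀ m : ℕ, ∀ᶠ nn in atTop,
        ∃ x ∈ closedBall z₀ (min (δ₀/2) ((1:ℝ)/(m+1))), fN nn x = 0 := by
      intro m
      refine key _ (lt_min (by positivity) (by positivity)) (min_le_left _ _)
    obtain ⟨nk, hnkmono, hnkspec⟩ := Filter.extraction_forall_of_eventually keym
    choose w hw1 hw2 using hnkspec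
    refine ⟨nk, w, hnkmono, ?_, ?_, ?_⟩
    · intro k
      exact hδhalf ((closedBall_subset_closedBall (min_le_left _ _)) (hw1 k))
    · have hdk : ∀ k : ℕ, dist (w k) z₀ ≤ (1:ℝ)/(k+1) := fun k =>
        le_trans (mem_closedBall.mp (hw1 k)) (min_le_right _ _)
      rw [tendsto_iff_dist_tendsto_zero]
      refine squeeze_zero (fun k => dist_nonneg) hdk ?_
      exact tendsto_one_div_add_atTop_nhds_zero_nat
    · exact hw2
  · rintro ⟨nk, w, hmono, hwball, hwlim, hzero⟩
    have hl1 : Tendsto (fun k => f (w k)) atTop (nhds (f z₀)) := hfc.tendsto.comp hwlim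
    have hl2 : Tendsto (fun k => f (w k)) atTop (nhds 0) := by
      rw [Metric.tendsto_atTop]
      intro ε hε
      have hU := Metric.tendstoUniformlyOn_iff.mp hTU ε hε
      have hnk : Tendsto nk atTop atTop := hmono.tendsto_atTop
      have hwin : ∀ᶠ k in atTop, w k ∈ closedBall z₀ δ₀ :=
        hwlim.eventually (eventually_of_mem (closedBall_mem_nhds z₀ hδ₀pos) fun x hx => hx)
      have := (hnk.eventually hU).and hwin
      obtain ⟨N, hN⟩ := eventually_atTop.mp this
      refine ⟨N, fun k hk => ?_⟩
      have h1 := (hN k hk).1 (w k) (hN k hk).2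
      have h2 : fN (nk k) (w k) = 0 := hzero k
      rw [h2] at h1
      simpa [dist_comm] using h1
    exact tendsto_nhds_unique hl1 hl2
end
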